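/- Let f be L-smooth convex with minimizer x⋆, and consider the SGD step x_{k+1} = x_k - δ_k G(x_k; i_k), where the stochastic oracle is unbiased (E_i G(x;i) = f'(x)) and satisfies E_i ‖G(x_k;i)‖² ≤ σ² + ‖f'(x_k)‖². Define d_{k+1} = d_k + δ_k L and e_k = (δ_k² L/2)(1 + d_{k+1}). If δ_k d_{k+1} ≥ e_k (in particular when 0 ≤ δ_k ≤ 1/L), then E_{i_k}[ d_{k+1}(f(x_{k+1}) - f(x⋆)) + (L/2)‖x_{k+1} - x⋆‖² ] ≤ d_k (f(x_k) - f(x⋆)) + (L/2)‖x_k - x⋆‖² + e_k σ². -/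

import Mathlib

open Finset

section Aux

variable {F : Type*} [NormedAddCommGroup F] [InnerProductSpace ℝ F] [CompleteSpace F]

/-- derivative of f along the line x + t • v -/
lemma line_hasDerivAt (f : F → ℝ) (f' : F → F) (hgrad : ∀ x, HasGradientAt f (f' x) x)
    (x v : F) (t : ℝ) :
    HasDerivAt (fun s : ℝ => f (x + s • v)) (inner ℝ (f' (x + t • v)) v : ℝ) t := by
  have hc : HasDerivAt (fun s : ℝ => x + s • v) v t := by
    simpa using ((hasDerivAt_id t).smul_const v).const_add x
  have := ((hgrad (x + t • v)).hasFDerivAt).comp_hasDerivAt t hc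
  simpa [InnerProductSpace.toDual_apply_apply, Function.comp_def] using this

lemma grad_lower (f : F → ℝ) (f' : F → F) (hgrad : ∀ x, HasGradientAt f (f' x) x)
    (hconv : ConvexOn ℝ Set.univ f) (x y : F) :
    f x + (inner ℝ (f' x) (y - x) : ℝ) ≤ f y := by
  have hφ : ConvexOn ℝ Set.univ (fun t : ℝ => f (x + t • (y - x))) := by
    have := hconv.comp_affineMap (AffineMap.lineMap x y)
    simp only [Set.preimage_univ] at this
    refine this.congr ?_
    intro t _
    simp [AffineMap.lineMap_apply, smul_sub]
    abel
  have hd := line_hasDerivAt f f' hgrad x (y - x) 0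
  simp only [zero_smul, add_zero] at hd
  have := hφ.le_slope_of_hasDerivAt (Set.mem_univ (0:ℝ)) (Set.mem_univ (1:ℝ)) one_pos hd
  simp [slope_def_field] at this
  linarith

lemma descent_lemma (f : F → ℝ) (f' : F → F) (hgrad : ∀ x, HasGradientAt f (f' x) x)
    (L : ℝ) (hL : 0 ≤ L) (hsmooth : ∀ x y, ‖f' x - f' y‖ ≤ L * ‖x - y‖) (x y : F) :
    f y ≤ f x + (inner ℝ (f' x) (y - x) : ℝ) + L / 2 * ‖y - x‖ ^ 2 := by
  set v := y - x with hv
  set h : ℝ → ℝ := fun t => f (x + t • v) - t * (inner ℝ (f' x) v : ℝ) - L / 2 * t ^ 2 * ‖v‖ ^ 2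
    with hh
  have hd : ∀ t : ℝ, HasDerivAt h
      ((inner ℝ (f' (x + t • v)) v : ℝ) - (inner ℝ (f' x) v : ℝ) - L * t * ‖v‖ ^ 2) t := by
    intro t
    have h1 := line_hasDerivAt f f' hgrad x v t
    have h2 : HasDerivAt (fun t : ℝ => t * (inner ℝ (f' x) v : ℝ)) (inner ℝ (f' x) v : ℝ) t := by
      simpa using (hasDerivAt_id t).mul_const (inner ℝ (f' x) v : ℝ)
    have h3 : HasDerivAt (fun t : ℝ => L / 2 * t ^ 2 * ‖v‖ ^ 2) (L * t * ‖v‖ ^ 2) t := by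
      have := ((hasDerivAt_pow 2 t).const_mul (L / 2)).mul_const (‖v‖ ^ 2)
      refine this.congr_deriv ?_
      ring
    exact (h1.sub h2).sub h3
  have hanti : AntitoneOn h (Set.Icc (0:ℝ) 1) := by
    apply antitoneOn_of_deriv_nonpos (convex_Icc 0 1)
    · exact (Continuous.continuousOn (by
        exact Continuous.sub (Continuous.sub (by
          have : Continuous f := by
            have : Differentiable ℝ f := fun z => ((hgrad z).hasFDerivAt).differentiableAt
            exact this.continuous
          fun_prop) (by fun_prop)) (by fun_prop)))
    · intro t ht
      exact (hd t).differentiableAt.differentiableWithinAt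
    · intro t ht
      rw [(hd t).deriv]
      rw [interior_Icc] at ht
      have hb : (inner ℝ (f' (x + t • v)) v : ℝ) - (inner ℝ (f' x) v : ℝ)
          = (inner ℝ (f' (x + t • v) - f' x) v : ℝ) := by rw [inner_sub_left]
      have h4 : (inner ℝ (f' (x + t • v) - f' x) v : ℝ) ≤ ‖f' (x + t • v) - f' x‖ * ‖v‖ :=
        real_inner_le_norm _ _
      have h5 : ‖f' (x + t • v) - f' x‖ ≤ L * (t * ‖v‖) := by
        have := hsmooth (x + t • v) x
        simpa [norm_smul, abs_of_nonneg ht.1.le] using this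
      nlinarith [norm_nonneg v, norm_nonneg (f' (x + t • v) - f' x), ht.1.le,
        mul_nonneg (mul_nonneg hL ht.1.le) (norm_nonneg v)]
  have := hanti (Set.left_mem_Icc.mpr zero_le_one) (Set.right_mem_Icc.mpr zero_le_one) zero_le_one
  simp only [hh] at this
  simp at this
  have hxy : x + v = y := by rw [hv]; abel
  rw [hxy] at this
  linarith

end Aux

private lemma step_arith (L δ dk fA fxk fstar ip1 ip2 gn cn : ℝ)
    (hdk : 0 ≤ dk) (hδ : 0 ≤ δ) (hL : 0 ≤ L)
    (hA : fA ≤ fxk - δ * ip1 + L / 2 * (δ * gn) ^ 2) :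
    (dk + δ * L) * (fA - fstar) + L / 2 * (cn - 2 * (δ * ip2) + (δ * gn) ^ 2)
      ≤ ((dk + δ * L) * (fxk - fstar) + L / 2 * cn)
        - (dk + δ * L) * δ * ip1 - L * δ * ip2
        + ((dk + δ * L) + 1) * (L * δ ^ 2 / 2) * gn ^ 2 := by
  have hd2 : 0 ≤ dk + δ * L := by positivity
  have h1 := mul_le_mul_of_nonneg_left hA hd2
  nlinarith [h1]

private lemma final_arith (L δ dk A P g2 s2 cn : ℝ) (hδ : 0 ≤ δ) (hL : 0 < L)
    (hg2 : 0 ≤ g2) (hcv : A ≤ P)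
    (hstep : δ * (dk + δ * L) ≥ δ ^ 2 * L / 2 * (1 + (dk + δ * L))) :
    ((dk + δ * L) * A + L / 2 * cn) - (dk + δ * L) * δ * g2 - L * δ * P
        + ((dk + δ * L) + 1) * (L * δ ^ 2 / 2) * (s2 + g2)
      ≤ dk * A + L / 2 * cn + (δ ^ 2 * L / 2 * (1 + (dk + δ * L))) * s2 := by
  nlinarith [mul_le_mul_of_nonneg_left hcv (mul_nonneg hL.le hδ),
    mul_nonneg (sub_nonneg.mpr hstep) hg2]

/-- One-step potential inequality for SGD under a bounded-variance-type
second moment bound. -/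
theorem sgd_potential_decrease {d n : ℕ} (hn : 0 < n) (L σ : ℝ) (hL : 0 < L)
    (f : EuclideanSpace ℝ (Fin d) → ℝ)
    (f' : EuclideanSpace ℝ (Fin d) → EuclideanSpace ℝ (Fin d))
    (hgrad : ∀ x, HasGradientAt f (f' x) x)
    (hconv : ConvexOn ℝ Set.univ f)
    (hsmooth : ∀ x y, ‖f' x - f' y‖ ≤ L * ‖x - y‖)
    (xstar : EuclideanSpace ℝ (Fin d)) (hmin : ∀ y, f xstar ≤ f y)
    (δ dk : ℝ) (hδ : 0 ≤ δ) (hdk : 0 ≤ dk)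
    (xk : EuclideanSpace ℝ (Fin d)) (G : Fin n → EuclideanSpace ℝ (Fin d))
    (hunbiased : (n : ℝ)⁻¹ • (∑ i, G i) = f' xk)
    (hsecond : (n : ℝ)⁻¹ * (∑ i, ‖G i‖ ^ 2) ≤ σ ^ 2 + ‖f' xk‖ ^ 2)
    (hstepsize : δ * (dk + δ * L) ≥ δ ^ 2 * L / 2 * (1 + (dk + δ * L))) :
    (n : ℝ)⁻¹ * (∑ i, ((dk + δ * L) * (f (xk - δ • G i) - f xstar)
        + L / 2 * ‖(xk - δ • G i) - xstar‖ ^ 2))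
      ≤ dk * (f xk - f xstar) + L / 2 * ‖xk - xstar‖ ^ 2
        + (δ ^ 2 * L / 2 * (1 + (dk + δ * L))) * σ ^ 2 := by
  have hn' : (n : ℝ) ≠ 0 := Nat.cast_ne_zero.mpr hn.ne'
  have hsum : (∑ i, G i) = (n : ℝ) • (f' xk) := by
    rw [← hunbiased, smul_smul, mul_inv_cancel₀ hn', one_smul]
  -- per-index bound
  have hterm : ∀ i : Fin n, (dk + δ * L) * (f (xk - δ • G i) - f xstar)
      + L / 2 * ‖(xk - δ • G i) - xstar‖ ^ 2
      ≤ ((dk + δ * L) * (f xk - f xstar) + L / 2 * ‖xk - xstar‖ ^ 2)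
        - (dk + δ * L) * δ * (inner ℝ (f' xk) (G i) : ℝ)
        - L * δ * (inner ℝ (xk - xstar) (G i) : ℝ)
        + ((dk + δ * L) + 1) * (L * δ ^ 2 / 2) * ‖G i‖ ^ 2 := by
    intro i
    have hA := descent_lemma f f' hgrad L hL.le hsmooth xk (xk - δ • G i)
    have e1 : xk - δ • G i - xk = -(δ • G i) := by abel
    rw [e1, inner_neg_right, real_inner_smul_right, norm_neg, norm_smul,
      Real.norm_eq_abs, abs_of_nonneg hδ] at hA
    have hB : ‖(xk - δ • G i) - xstar‖ ^ 2
        = ‖xk - xstar‖ ^ 2 - 2 * (δ * (inner ℝ (xk - xstar) (G i) : ℝ)) + (δ * ‖G i‖) ^ 2 := by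
      have e2 : xk - δ • G i - xstar = (xk - xstar) - δ • G i := by abel
      rw [e2, norm_sub_sq_real, real_inner_smul_right, norm_smul, Real.norm_eq_abs,
        abs_of_nonneg hδ]
    rw [hB]
    have := step_arith L δ dk (f (xk - δ • G i)) (f xk) (f xstar)
      (inner ℝ (f' xk) (G i) : ℝ) (inner ℝ (xk - xstar) (G i) : ℝ) (‖G i‖)
      (‖xk - xstar‖ ^ 2) hdk hδ hL.le (by linarith)
    linarith
  have e1 : ∑ i, (inner ℝ (f' xk) (G i) : ℝ) = (n : ℝ) * ‖f' xk‖ ^ 2 := by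
    rw [← inner_sum, hsum, real_inner_smul_right, real_inner_self_eq_norm_sq]
  have e2 : ∑ i, (inner ℝ (xk - xstar) (G i) : ℝ)
      = (n : ℝ) * (inner ℝ (xk - xstar) (f' xk) : ℝ) := by
    rw [← inner_sum, hsum, real_inner_smul_right]
  have hcv : f xk - f xstar ≤ (inner ℝ (xk - xstar) (f' xk) : ℝ) := by
    have h := grad_lower f f' hgrad hconv xk xstar
    have e3 : (inner ℝ (f' xk) (xstar - xk) : ℝ)
        = -(inner ℝ (xk - xstar) (f' xk) : ℝ) := by
      rw [show xstar - xk = -(xk - xstar) by abel, inner_neg_right, real_inner_comm]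
    rw [e3] at h
    linarith
  have hC1' : (0:ℝ) ≤ ((dk + δ * L) + 1) * (L * δ ^ 2 / 2) := by positivity
  calc (n : ℝ)⁻¹ * (∑ i, ((dk + δ * L) * (f (xk - δ • G i) - f xstar)
        + L / 2 * ‖(xk - δ • G i) - xstar‖ ^ 2))
      ≤ (n : ℝ)⁻¹ * (∑ i, (((dk + δ * L) * (f xk - f xstar) + L / 2 * ‖xk - xstar‖ ^ 2)
          - (dk + δ * L) * δ * (inner ℝ (f' xk) (G i) : ℝ)
          - L * δ * (inner ℝ (xk - xstar) (G i) : ℝ)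
          + ((dk + δ * L) + 1) * (L * δ ^ 2 / 2) * ‖G i‖ ^ 2)) := by
        apply mul_le_mul_of_nonneg_left _ (by positivity)
        exact Finset.sum_le_sum fun i _ => hterm i
    _ = ((dk + δ * L) * (f xk - f xstar) + L / 2 * ‖xk - xstar‖ ^ 2)
          - (dk + δ * L) * δ * ‖f' xk‖ ^ 2
          - L * δ * (inner ℝ (xk - xstar) (f' xk) : ℝ)
          + ((dk + δ * L) + 1) * (L * δ ^ 2 / 2) * ((n : ℝ)⁻¹ * ∑ i, ‖G i‖ ^ 2) := by
        simp only [Finset.sum_add_distrib, Finset.sum_sub_distrib, Finset.sum_const,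
          Finset.card_univ, Fintype.card_fin, nsmul_eq_mul, ← Finset.mul_sum]
        rw [e1, e2]
        field_simp
    _ ≤ ((dk + δ * L) * (f xk - f xstar) + L / 2 * ‖xk - xstar‖ ^ 2)
          - (dk + δ * L) * δ * ‖f' xk‖ ^ 2
          - L * δ * (inner ℝ (xk - xstar) (f' xk) : ℝ)
          + ((dk + δ * L) + 1) * (L * δ ^ 2 / 2) * (σ ^ 2 + ‖f' xk‖ ^ 2) := by
        have := mul_le_mul_of_nonneg_left hsecond hC1'
        linarith
    _ ≤ dk * (f xk - f xstar) + L / 2 * ‖xk - xstar‖ ^ 2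
        + (δ ^ 2 * L / 2 * (1 + (dk + δ * L))) * σ ^ 2 :=
        final_arith L δ dk (f xk - f xstar) (inner ℝ (xk - xstar) (f' xk) : ℝ)
          (‖f' xk‖ ^ 2) (σ ^ 2) (‖xk - xstar‖ ^ 2) hδ hL (sq_nonneg _) hcv hstepsize
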